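/- Fix δ > 0. For each n ≥ 2, let d(n) be an integer with d(n) ≥ (2 + δ) n log n, and let A ∈ ℝ^{n×d(n)} be a random matrix with independent standard Gaussian entries and rows a_1ᵀ, …, a_nᵀ. Then the probability that every row of A is an extreme point of the convex hull of the rows, i.e. P[ a_i ∉ conv{a_j : j ≠ i} for all i ∈ {1,…,n} ], tends to 1 as n → ∞. -/

import Mathlib

open Finset MeasureTheory ProbabilityTheory Filter

/-- The law of an `n × d` matrix with i.i.d. standard Gaussian entries. -/
noncomputable def gaussMeasure (n d : ℕ) : Measure (Fin n × Fin d → ℝ) :=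
  Measure.pi fun _ => gaussianReal 0 1

namespace Stmt16Aux

open Matrix

instance (n d : ℕ) : IsProbabilityMeasure (gaussMeasure n d) := by
  unfold gaussMeasure; infer_instance

noncomputable def gm : Measure ℝ := gaussianReal 0 1

instance : IsProbabilityMeasure gm := by unfold gm; infer_instance

noncomputable def rowM (d : ℕ) : Measure (Fin d → ℝ) := Measure.pi fun _ => gm

instance (d : ℕ) : IsProbabilityMeasure (rowM d) := by unfold rowM; infer_instance

noncomputable def Q (m d : ℕ) : Measure (Fin m → Fin d → ℝ) := Measure.pi fun _ => rowM d

instance (m d : ℕ) : IsProbabilityMeasure (Q m d) := by unfold Q; infer_instance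

/-- The affine lift `y ↦ (1, y)`. -/
def lf (d : ℕ) (y : Fin d → ℝ) : Unit ⊕ Fin d → ℝ := Sum.elim (fun _ => 1) y

/-- The linear embedding `v ↦ (0, v)`. -/
def J (d : ℕ) : (Fin d → ℝ) →ₗ[ℝ] (Unit ⊕ Fin d → ℝ) where
  toFun v := Sum.elim 0 v
  map_add' u v := by funext i; cases i <;> simp
  map_smul' c v := by funext i; cases i <;> simp

lemma rowM_ac (d : ℕ) : rowM d ≪ (Measure.pi fun _ : Fin d => (volume : Measure ℝ)) := by
  induction d with
  | zero =>
    refine Measure.AbsolutelyContinuous.mk fun s hs h0 => ?_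
    rcases s.eq_empty_or_nonempty with rfl | ⟨x, hx⟩
    · simp
    · exfalso
      have hsu : s = Set.univ := by
        ext y; simp only [Set.mem_univ, iff_true]
        have : y = x := Subsingleton.elim y x
        rwa [this]
      rw [hsu, Measure.pi_univ] at h0
      simp at h0
  | succ d ih =>
    have h1 := (measurePreserving_piFinSuccAbove (fun _ : Fin (d + 1) => gm) 0).symm
    have h2 := (measurePreserving_piFinSuccAbove
      (fun _ : Fin (d + 1) => (volume : Measure ℝ)) 0).symm
    rw [show rowM (d + 1) = Measure.pi fun _ : Fin (d+1) => gm from rfl, ← h1.map_eq, ← h2.map_eq]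
    refine Measure.AbsolutelyContinuous.map ?_
      (MeasurableEquiv.piFinSuccAbove (fun _ : Fin (d + 1) => ℝ) 0).symm.measurable
    exact Measure.AbsolutelyContinuous.prod
      (gaussianReal_absolutelyContinuous 0 one_ne_zero) ih

/-- The slice lemma: the set of `y` with `(1, y)` in a proper subspace is Gaussian-null. -/
lemma slice_null (d : ℕ) (W : Submodule ℝ (Unit ⊕ Fin d → ℝ)) (hW : W ≠ ⊤) :
    rowM d {y | lf d y ∈ W} = 0 := by
  set T : Set (Fin d → ℝ) := {y | lf d y ∈ W} with hT
  rcases T.eq_empty_or_nonempty with h | ⟨y0, hy0⟩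
  · rw [h]; simp
  · have hy0' : lf d y0 ∈ W := hy0
    set V : Submodule ℝ (Fin d → ℝ) := W.comap (J d) with hV
    -- T is the affine coset y0 + V
    have hTeq : T = (AffineSubspace.mk' y0 V : Set (Fin d → ℝ)) := by
      ext y
      have hdec : lf d y = lf d y0 + J d (y - y0) := by
        funext i; cases i <;> simp [lf, J]
      constructor
      · intro hy
        have : J d (y - y0) ∈ W := by
          have hy' : lf d y ∈ W := hy
          rw [hdec] at hy'
          exact (W.add_mem_iff_right hy0').mp hy'
        rw [SetLike.mem_coe, AffineSubspace.mem_mk']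
        simpa [hV, Submodule.mem_comap] using this
      · intro hy
        rw [SetLike.mem_coe, AffineSubspace.mem_mk'] at hy
        have : J d (y - y0) ∈ W := by simpa [hV, Submodule.mem_comap] using hy
        show lf d y ∈ W
        rw [hdec]
        exact W.add_mem hy0' this
    -- V is proper
    have hVne : V ≠ ⊤ := by
      intro hVtop
      apply hW
      rw [Submodule.eq_top_iff']
      intro z
      have hz : z = z (Sum.inl ()) • lf d y0
          + J d (fun j => z (Sum.inr j) - z (Sum.inl ()) * y0 j) := by
        funext i
        cases i with
        | inl u => cases u; simp [lf, J]
        | inr j => simp only [Pi.add_apply, Pi.smul_apply, lf, J, Sum.elim_inr,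
            LinearMap.coe_mk, AddHom.coe_mk, smul_eq_mul]; ring
      rw [hz]
      refine W.add_mem (W.smul_mem _ hy0') ?_
      have : (fun j => z (Sum.inr j) - z (Sum.inl ()) * y0 j) ∈ V :=
        hVtop ▸ Submodule.mem_top
      simpa [hV, Submodule.mem_comap] using this
    have hvol : (volume : Measure (Fin d → ℝ)) T = 0 := by
      rw [hTeq]
      refine Measure.addHaar_affineSubspace _ _ ?_
      intro htop
      apply hVne
      have := AffineSubspace.direction_mk' y0 V
      rw [htop, AffineSubspace.direction_top] at this
      exact this.symm
    have hvol' : (Measure.pi fun _ : Fin d => (volume : Measure ℝ)) T = 0 := by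
      rwa [← volume_pi]
    exact rowM_ac d hvol'

/-- Gram determinant criterion for linear dependence of rows. -/
lemma det_gram_eq_zero_iff {m : ℕ} {ι : Type*} [Fintype ι] (B : Matrix (Fin m) ι ℝ) :
    (B * Bᵀ).det = 0 ↔ ¬ LinearIndependent ℝ (fun k => B k) := by
  have key : ∀ v : Fin m → ℝ, (∑ k, v k • B k) = v ᵥ* B := by
    intro v; funext j
    simp [Matrix.vecMul, dotProduct, Finset.sum_apply]
  constructor
  · intro hdet hindep
    obtain ⟨v, hv0, hv⟩ := Matrix.exists_vecMul_eq_zero_iff.mpr hdet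
    have hBv : B *ᵥ (v ᵥ* B) = 0 := by
      rw [← Matrix.vecMul_transpose, Matrix.vecMul_vecMul]
      exact hv
    have hdot : (v ᵥ* B) ⬝ᵥ (v ᵥ* B) = 0 := by
      have := congrArg (fun w => dotProduct v w) hBv
      simpa [Matrix.dotProduct_mulVec] using this
    have hw : v ᵥ* B = 0 := dotProduct_self_eq_zero.mp hdot
    have := Fintype.linearIndependent_iff.mp hindep v (by rw [key]; exact hw)
    exact hv0 (funext this)
  · intro hdep
    rw [← Matrix.exists_vecMul_eq_zero_iff]
    rw [Fintype.linearIndependent_iff] at hdep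
    push_neg at hdep
    obtain ⟨v, hsum, i, hi⟩ := hdep
    refine ⟨v, fun h => hi (by rw [h]; rfl), ?_⟩
    rw [← Matrix.vecMul_vecMul]
    rw [← key, hsum]
    exact Matrix.zero_vecMul _

/-- The matrix of lifted rows. -/
def Bmat (m d : ℕ) (x : Fin m → Fin d → ℝ) : Matrix (Fin m) (Unit ⊕ Fin d) ℝ :=
  Matrix.of fun k => lf d (x k)

/-- The "affinely dependent rows" event. -/
def DepSet (m d : ℕ) : Set (Fin m → Fin d → ℝ) :=
  {x | ¬ LinearIndependent ℝ (fun k => lf d (x k))}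

lemma depSet_eq (m d : ℕ) :
    DepSet m d = (fun x => (Bmat m d x * (Bmat m d x)ᵀ).det) ⁻¹' {0} := by
  ext x
  simp only [DepSet, Set.mem_setOf_eq, Set.mem_preimage, Set.mem_singleton_iff]
  rw [det_gram_eq_zero_iff]
  rfl

lemma measurable_gram (m d : ℕ) :
    Measurable (fun x => (Bmat m d x * (Bmat m d x)ᵀ).det) := by
  classical
  have hkj : ∀ (k : Fin m) (j : Fin d), Measurable fun x : Fin m → Fin d → ℝ => x k j :=
    fun k j => (measurable_pi_apply j).comp (measurable_pi_apply k)
  have hent : ∀ k l : Fin m, Measurable fun x => (Bmat m d x * (Bmat m d x)ᵀ) k l := by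
    intro k l
    simp_rw [Matrix.mul_apply, Matrix.transpose_apply]
    refine Finset.measurable_sum _ fun i _ => ?_
    cases i with
    | inl u =>
      simp only [Bmat, lf, Matrix.of_apply, Sum.elim_inl]
      exact measurable_const
    | inr j =>
      simp only [Bmat, lf, Matrix.of_apply, Sum.elim_inr]
      exact (hkj k j).mul (hkj l j)
  simp_rw [Matrix.det_apply']
  refine Finset.measurable_sum _ fun σ _ => ?_
  exact (Finset.measurable_prod _ fun i _ => hent (σ i) i).const_mul _

lemma measurableSet_depSet (m d : ℕ) : MeasurableSet (DepSet m d) := by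
  rw [depSet_eq]
  exact measurable_gram m d (measurableSet_singleton 0)

lemma depSet_null (d : ℕ) : ∀ m : ℕ, m ≤ d + 1 → Q m d (DepSet m d) = 0 := by
  intro m
  induction m with
  | zero =>
    intro _
    have : DepSet 0 d = ∅ := by
      ext x
      simp [DepSet, linearIndependent_empty_type]
    rw [this]; simp
  | succ m ih =>
    intro hm
    have hmle : m ≤ d := by omega
    set e := MeasurableEquiv.piFinSuccAbove (fun _ : Fin (m + 1) => (Fin d → ℝ)) (Fin.last m)
      with he
    have hMP := measurePreserving_piFinSuccAbove (fun _ : Fin (m + 1) => rowM d) (Fin.last m)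
    set T : Set ((Fin d → ℝ) × (Fin m → Fin d → ℝ)) := e.symm ⁻¹' (DepSet (m+1) d) with hTdef
    have hTmeas : MeasurableSet T := e.symm.measurable (measurableSet_depSet (m+1) d)
    have hQT : Q (m+1) d (DepSet (m+1) d) = ((rowM d).prod (Q m d)) T := by
      have hmap := hMP.map_eq
      have : ((rowM d).prod (Measure.pi fun _ : Fin m => rowM d)) T
          = (Measure.map e (Measure.pi fun _ : Fin (m+1) => rowM d)) T := by rw [hmap]
      rw [show Q (m+1) d = Measure.pi fun _ : Fin (m+1) => rowM d from rfl,
        show Q m d = Measure.pi fun _ : Fin m => rowM d from rfl, this,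
        Measure.map_apply e.measurable hTmeas]
      congr 1
      rw [hTdef, ← Set.preimage_comp]
      simp
    -- membership description of T
    have hTmem : ∀ y x, ((y, x) ∈ T ↔
        ¬ (LinearIndependent ℝ (fun k : Fin m => lf d (x k)) ∧
          lf d y ∉ Submodule.span ℝ (Set.range fun k : Fin m => lf d (x k)))) := by
      intro y x
      have hsnoc : (fun k : Fin (m+1) => lf d ((e.symm (y, x)) k))
          = Fin.snoc (fun k : Fin m => lf d (x k)) (lf d y) := by
        have hes : e.symm (y, x) = Fin.snoc x y := by
          rw [he]
          simp [MeasurableEquiv.piFinSuccAbove_symm_apply, Fin.insertNth_last,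
            Fin.snocEquiv]
        funext k
        rw [hes]
        refine Fin.lastCases ?_ ?_ k
        · simp
        · intro k'; simp
      rw [hTdef]
      simp only [Set.mem_preimage, DepSet, Set.mem_setOf_eq]
      rw [hsnoc, linearIndependent_fin_snoc]
    -- bound the measure of T
    have hsub : T ⊆ (Set.univ ×ˢ DepSet m d) ∪ (T ∩ Set.univ ×ˢ (DepSet m d)ᶜ) := by
      intro ⟨y, x⟩ hyx
      by_cases hx : x ∈ DepSet m d
      · exact Or.inl ⟨Set.mem_univ _, hx⟩
      · exact Or.inr ⟨hyx, Set.mem_univ _, hx⟩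
    have h1 : ((rowM d).prod (Q m d)) (Set.univ ×ˢ DepSet m d) = 0 := by
      rw [Measure.prod_prod, ih (by omega)]
      simp
    have h2 : ((rowM d).prod (Q m d)) (T ∩ Set.univ ×ˢ (DepSet m d)ᶜ) = 0 := by
      have hAmeas : MeasurableSet (T ∩ Set.univ ×ˢ (DepSet m d)ᶜ) :=
        hTmeas.inter (MeasurableSet.univ.prod (measurableSet_depSet m d).compl)
      rw [Measure.prod_apply_symm hAmeas]
      have hzero : ∀ x, rowM d ((fun y => (y, x)) ⁻¹' (T ∩ Set.univ ×ˢ (DepSet m d)ᶜ)) = 0 := by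
        intro x
        by_cases hx : x ∈ DepSet m d
        · refine measure_mono_null ?_ (measure_empty)
          intro y hy
          exact absurd hx hy.2.2
        · have hindep : LinearIndependent ℝ (fun k : Fin m => lf d (x k)) := not_not.mp hx
          set W := Submodule.span ℝ (Set.range fun k : Fin m => lf d (x k)) with hWdef
          refine measure_mono_null (fun y hy => ?_) (slice_null d W ?_)
          · have hyT : (y, x) ∈ T := hy.1
            rw [hTmem] at hyT
            push_neg at hyT
            exact hyT hindep
          · intro hWtop
            have hcard : Module.finrank ℝ W ≤ m := by
              classical
              refine le_trans (finrank_span_le_card _) ?_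
              rw [Set.toFinset_range]
              refine le_trans Finset.card_image_le ?_
              simp
            rw [hWtop] at hcard
            rw [finrank_top] at hcard
            have : Module.finrank ℝ (Unit ⊕ Fin d → ℝ) = d + 1 := by
              rw [Module.finrank_pi]
              simp [Fintype.card_sum]
              omega
            omega
      calc ∫⁻ x, rowM d ((fun y => (y, x)) ⁻¹' (T ∩ Set.univ ×ˢ (DepSet m d)ᶜ)) ∂(Q m d)
          = ∫⁻ _, 0 ∂(Q m d) := lintegral_congr hzero
        _ = 0 := lintegral_zero
    have : ((rowM d).prod (Q m d)) T = 0 := by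
      refine le_antisymm ?_ zero_le
      refine le_trans (measure_mono hsub) ?_
      refine le_trans (measure_union_le _ _) ?_
      rw [h1, h2]; simp
    rw [hQT, this]

/-- The curry map. -/
def cur (n d : ℕ) : (Fin n × Fin d → ℝ) → (Fin n → Fin d → ℝ) := fun ω k j => ω (k, j)

lemma measurable_cur (n d : ℕ) : Measurable (cur n d) :=
  measurable_pi_lambda _ fun k => measurable_pi_lambda _ fun j => measurable_pi_apply (k, j)

/-- Index equivalence for peeling off row 0. -/
def idxE (n d : ℕ) : (Fin d ⊕ (Fin n × Fin d)) ≃ (Fin (n + 1) × Fin d) where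
  toFun := Sum.elim (fun j => (0, j)) (fun q => (q.1.succ, q.2))
  invFun := fun q => Fin.cases (Sum.inl q.2) (fun k => Sum.inr (k, q.2)) q.1
  left_inv := by rintro (j | ⟨k, j⟩) <;> simp
  right_inv := by
    rintro ⟨k, j⟩
    refine Fin.cases ?_ ?_ k <;> simp

lemma cur_mp (d : ℕ) : ∀ n : ℕ, MeasurePreserving (cur n d) (gaussMeasure n d) (Q n d) := by
  intro n
  induction n with
  | zero =>
    refine ⟨measurable_cur 0 d, ?_⟩
    haveI : IsProbabilityMeasure (gaussMeasure 0 d) := by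
      unfold gaussMeasure; infer_instance
    haveI : IsProbabilityMeasure ((gaussMeasure 0 d).map (cur 0 d)) :=
      Measure.isProbabilityMeasure_map (measurable_cur 0 d).aemeasurable
    ext s hs
    rcases s.eq_empty_or_nonempty with rfl | ⟨x, hx⟩
    · simp
    · have hsu : s = Set.univ := by
        ext y; simp only [Set.mem_univ, iff_true]
        have : y = x := Subsingleton.elim y x
        rwa [this]
      rw [hsu]
      simp [measure_univ]
  | succ n ih =>
    have φ1 := (measurePreserving_piCongrLeft
      (fun _ : Fin (n+1) × Fin d => gm) (idxE n d)).symm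
    have φ2 := measurePreserving_sumPiEquivProdPi
      (fun _ : Fin d ⊕ (Fin n × Fin d) => gm)
    have φ3 : MeasurePreserving (Prod.map (id : (Fin d → ℝ) → (Fin d → ℝ)) (cur n d))
        ((rowM d).prod (gaussMeasure n d)) ((rowM d).prod (Q n d)) :=
      MeasurePreserving.prod (MeasurePreserving.id _) ih
    have φ4 := (measurePreserving_piFinSuccAbove (fun _ : Fin (n+1) => rowM d) 0).symm
    have hcomp := ((φ4.comp φ3).comp φ2).comp φ1
    have hfun : ((MeasurableEquiv.piFinSuccAbove (fun _ : Fin (n+1) => (Fin d → ℝ)) 0).symm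
          ∘ (Prod.map id (cur n d))
          ∘ (MeasurableEquiv.sumPiEquivProdPi (fun _ : Fin d ⊕ (Fin n × Fin d) => ℝ))
          ∘ (MeasurableEquiv.piCongrLeft (fun _ : Fin (n+1) × Fin d => ℝ) (idxE n d)).symm)
        = cur (n+1) d := by
      funext ω
      set g : Fin d ⊕ (Fin n × Fin d) → ℝ := fun q => ω (idxE n d q) with hg
      have e1 : (MeasurableEquiv.piCongrLeft (fun _ : Fin (n+1) × Fin d => ℝ)
          (idxE n d)).symm ω = g := by
        funext q
        exact Equiv.piCongrLeft_symm_apply (P := fun _ : Fin (n+1) × Fin d => ℝ)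
          (e := idxE n d) ω q
      simp only [Function.comp_apply, e1]
      have e2 : (MeasurableEquiv.sumPiEquivProdPi (fun _ : Fin d ⊕ (Fin n × Fin d) => ℝ)) g
          = (fun j => g (Sum.inl j), fun q => g (Sum.inr q)) := rfl
      rw [e2]
      have e3 : Prod.map (id : (Fin d → ℝ) → (Fin d → ℝ)) (cur n d)
            ((fun j => g (Sum.inl j), fun q => g (Sum.inr q)))
          = (fun j => g (Sum.inl j), cur n d (fun q => g (Sum.inr q))) := rfl
      rw [e3]
      have e4 : (MeasurableEquiv.piFinSuccAbove (fun _ : Fin (n+1) => (Fin d → ℝ)) 0).symm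
            ((fun j => g (Sum.inl j), cur n d (fun q => g (Sum.inr q))))
          = Fin.insertNth 0 (fun j => g (Sum.inl j)) (cur n d (fun q => g (Sum.inr q))) := by
        simp [MeasurableEquiv.piFinSuccAbove_symm_apply, Fin.consEquiv]
      rw [e4]
      funext k
      refine Fin.cases ?_ ?_ k
      · rw [Fin.insertNth_apply_same]
        rfl
      · intro k'
        have hsa : (0 : Fin (n+1)).succAbove k' = k'.succ := by
          rw [Fin.succAbove_zero]
        rw [← hsa, Fin.insertNth_apply_succAbove]
        rfl
    simp only [Function.comp_assoc] at hcomp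
    rw [hfun] at hcomp
    exact hcomp

end Stmt16Aux

open Stmt16Aux in
/-- For i.i.d. standard Gaussian data with ambient dimension `d(n) ≥ (2 + δ) n log n`,
the probability that every row is an extreme point of the convex hull of the rows
(i.e. lies outside the convex hull of the other rows) tends to one as `n → ∞`. -/
theorem stmt16 (δ : ℝ) (hδ : 0 < δ) (d : ℕ → ℕ)
    (hd : ∀ n : ℕ, 2 ≤ n → (2 + δ) * n * Real.log n ≤ d n) :
    Tendsto (fun n : ℕ => gaussMeasure n (d n)
        {ω | ∀ i : Fin n, (fun j => ω (i, j)) ∉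
          convexHull ℝ {x : Fin (d n) → ℝ | ∃ k : Fin n, k ≠ i ∧ x = fun j => ω (k, j)}})
      atTop (nhds 1) := by
  have key : ∀ n : ℕ, 2 ≤ n → gaussMeasure n (d n)
      {ω | ∀ i : Fin n, (fun j => ω (i, j)) ∉
        convexHull ℝ {x : Fin (d n) → ℝ | ∃ k : Fin n, k ≠ i ∧ x = fun j => ω (k, j)}} = 1 := by
    intro n hn
    set D := d n with hD
    -- n ≤ D
    have hlog2 : (0.6931471803 : ℝ) < Real.log 2 := Real.log_two_gt_d9
    have hlogn : Real.log 2 ≤ Real.log n := by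
      apply Real.log_le_log (by norm_num)
      exact_mod_cast hn
    have hnR : (2 : ℝ) ≤ (n : ℝ) := by exact_mod_cast hn
    have hnpos : (0 : ℝ) < (n : ℝ) := by linarith
    have hlogpos : (0 : ℝ) < Real.log n := by linarith
    have h2 : (1 : ℝ) < (2 + δ) * Real.log n := by
      nlinarith [mul_pos hδ hlogpos]
    have hcast : (n : ℝ) < (D : ℝ) := by
      show (n : ℝ) < (d n : ℝ)
      calc (n : ℝ) = n * 1 := by ring
        _ < n * ((2 + δ) * Real.log n) := by
            exact mul_lt_mul_of_pos_left h2 hnpos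
        _ = (2 + δ) * n * Real.log n := by ring
        _ ≤ d n := hd n hn
    have hnD : n ≤ D := by
      have : n < D := by exact_mod_cast hcast
      omega
    haveI : IsProbabilityMeasure (gaussMeasure n D) := by
      unfold gaussMeasure; infer_instance
    set N : Set (Fin n × Fin D → ℝ) := cur n D ⁻¹' DepSet n D with hN
    have hNmeas : MeasurableSet N := measurable_cur n D (measurableSet_depSet n D)
    have hNnull : gaussMeasure n D N = 0 := by
      rw [hN, (cur_mp D n).measure_preimage (measurableSet_depSet n D).nullMeasurableSet]
      exact depSet_null D n (by omega)
    set S : Set (Fin n × Fin D → ℝ) := {ω | ∀ i : Fin n, (fun j => ω (i, j)) ∉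
        convexHull ℝ {x : Fin D → ℝ | ∃ k : Fin n, k ≠ i ∧ x = fun j => ω (k, j)}} with hS
    have hsub : Nᶜ ⊆ S := by
      intro ω hω
      have hindep : LinearIndependent ℝ (fun k : Fin n => lf D (cur n D ω k)) := by
        simpa [hN, DepSet, not_not] using hω
      set a : Fin n → (Fin D → ℝ) := cur n D ω with ha
      have hAff : AffineIndependent ℝ a := by
        rw [affineIndependent_iff]
        intro s w hw hws
        classical
        set c : Fin n → ℝ := fun k => if k ∈ s then w k else 0 with hc
        have hcsum : ∑ k, c k • lf D (a k) = 0 := by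
          funext i
          cases i with
          | inl u =>
            simp only [Finset.sum_apply, Pi.smul_apply, Pi.zero_apply, lf, Sum.elim_inl,
              smul_eq_mul, mul_one, hc]
            rw [Finset.sum_ite_mem, Finset.univ_inter]
            exact hw
          | inr j =>
            simp only [Finset.sum_apply, Pi.smul_apply, Pi.zero_apply, lf, Sum.elim_inr,
              smul_eq_mul, hc]
            have := congrArg (fun f => f j) hws
            simp only [Finset.sum_apply, Pi.smul_apply, Pi.zero_apply, smul_eq_mul] at this
            have hstep : ∑ k : Fin n, (if k ∈ s then w k else 0) * a k j
                = ∑ k : Fin n, (if k ∈ s then w k * a k j else 0) :=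
              Finset.sum_congr rfl fun k _ => by split <;> simp
            rw [hstep, Finset.sum_ite_mem, Finset.univ_inter]
            exact this
        have hzero := Fintype.linearIndependent_iff.mp hindep c hcsum
        intro e he
        have := hzero e
        simpa [hc, he] using this
      intro i hmem
      have hsubset : {x : Fin D → ℝ | ∃ k : Fin n, k ≠ i ∧ x = fun j => ω (k, j)}
          ⊆ a '' (Set.univ \ {i}) := by
        rintro x ⟨k, hki, rfl⟩
        exact ⟨k, ⟨Set.mem_univ _, hki⟩, rfl⟩
      have hnotin := hAff.notMem_affineSpan_diff i Set.univ
      apply hnotin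
      have h1 : (fun j => ω (i, j)) ∈ convexHull ℝ (a '' (Set.univ \ {i})) :=
        convexHull_mono hsubset hmem
      have h2 := convexHull_subset_affineSpan (a '' (Set.univ \ {i})) h1
      exact h2
    refine le_antisymm (prob_le_one) ?_
    calc (1 : ENNReal) = gaussMeasure n D Nᶜ := by
          rw [prob_compl_eq_one_sub hNmeas, hNnull]; simp
      _ ≤ gaussMeasure n D S := measure_mono hsub
  have heq : (fun _ : ℕ => (1 : ENNReal)) =ᶠ[atTop] (fun n : ℕ => gaussMeasure n (d n)
      {ω | ∀ i : Fin n, (fun j => ω (i, j)) ∉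
        convexHull ℝ {x : Fin (d n) → ℝ | ∃ k : Fin n, k ≠ i ∧ x = fun j => ω (k, j)}}) := by
    filter_upwards [eventually_ge_atTop 2] with n hn
    exact (key n hn).symm
  exact Tendsto.congr' heq tendsto_const_nhds
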